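/- Conditional independence characterizes vanishing marginal contributions in the information-gain game: for every j ∈ Fin d and S ⊆ Fin d with j ∉ S, the condition (for all x ∈ X and y ∈ Y, p(y | x_{S∪{j}}) = p(y | x_S)) holds if and only if Δ_{v_IG}(S, j, x) = 0 for all x ∈ X. -/

import Mathlib

open Finset Real

noncomputable section

/-- Conditional pmf `p(y | x_S)` in the finite discrete setting. -/
def condP {d : ℕ} {Xf : Fin d → Type*} {Y : Type*} [∀ j, Fintype (Xf j)] [Fintype Y]
    [∀ j, DecidableEq (Xf j)]
    (p : ((∀ j, Xf j) × Y) → ℝ) (S : Finset (Fin d)) (x : ∀ j, Xf j) (y : Y) : ℝ :=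
  (∑ x' : ∀ j, Xf j, if ∀ j ∈ S, x' j = x j then p (x', y) else 0) /
  (∑ x' : ∀ j, Xf j, if ∀ j ∈ S, x' j = x j then ∑ y' : Y, p (x', y') else 0)

/-- Marginal feature pmf `P(x)`. -/
def margP {d : ℕ} {Xf : Fin d → Type*} {Y : Type*} [Fintype Y]
    (p : ((∀ j, Xf j) × Y) → ℝ) (x : ∀ j, Xf j) : ℝ :=
  ∑ y : Y, p (x, y)

/-- Local conditional entropy `H(Y | x_S)`. -/
def entY {d : ℕ} {Xf : Fin d → Type*} {Y : Type*} [∀ j, Fintype (Xf j)] [Fintype Y]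
    [∀ j, DecidableEq (Xf j)]
    (p : ((∀ j, Xf j) × Y) → ℝ) (S : Finset (Fin d)) (x : ∀ j, Xf j) : ℝ :=
  -∑ y : Y, condP p S x y * Real.log (condP p S x y)

/-- The KL-divergence game `v_KL(S, x) = -D_KL(p(Y|x) ‖ p(Y|x_S))`. -/
def vKL {d : ℕ} {Xf : Fin d → Type*} {Y : Type*} [∀ j, Fintype (Xf j)] [Fintype Y]
    [∀ j, DecidableEq (Xf j)]
    (p : ((∀ j, Xf j) × Y) → ℝ) (S : Finset (Fin d)) (x : ∀ j, Xf j) : ℝ :=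
  -∑ y : Y, condP p Finset.univ x y *
      Real.log (condP p Finset.univ x y / condP p S x y)

/-- The cross-entropy game `v_CE(S, x) = -H(p(Y|x), p(Y|x_S))`. -/
def vCE {d : ℕ} {Xf : Fin d → Type*} {Y : Type*} [∀ j, Fintype (Xf j)] [Fintype Y]
    [∀ j, DecidableEq (Xf j)]
    (p : ((∀ j, Xf j) × Y) → ℝ) (S : Finset (Fin d)) (x : ∀ j, Xf j) : ℝ :=
  ∑ y : Y, condP p Finset.univ x y * Real.log (condP p S x y)

/-- The information-gain game `v_IG(S, x) = -H(Y | x_S)`. -/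
def vIG {d : ℕ} {Xf : Fin d → Type*} {Y : Type*} [∀ j, Fintype (Xf j)] [Fintype Y]
    [∀ j, DecidableEq (Xf j)]
    (p : ((∀ j, Xf j) × Y) → ℝ) (S : Finset (Fin d)) (x : ∀ j, Xf j) : ℝ :=
  -entY p S x

/-- The local entropy game `v_H(S, x) = H(Y | x_S)`. -/
def vH {d : ℕ} {Xf : Fin d → Type*} {Y : Type*} [∀ j, Fintype (Xf j)] [Fintype Y]
    [∀ j, DecidableEq (Xf j)]
    (p : ((∀ j, Xf j) × Y) → ℝ) (S : Finset (Fin d)) (x : ∀ j, Xf j) : ℝ :=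
  entY p S x

/-- The marginalized entropy game
`v_{H*}(S, x) = E[H(Y | x') | x'_S = x_S] = ∑_{x' : x'_S = x_S} P(x' | x_S) H(Y|x')`. -/
def vHstar {d : ℕ} {Xf : Fin d → Type*} {Y : Type*} [∀ j, Fintype (Xf j)] [Fintype Y]
    [∀ j, DecidableEq (Xf j)]
    (p : ((∀ j, Xf j) × Y) → ℝ) (S : Finset (Fin d)) (x : ∀ j, Xf j) : ℝ :=
  ∑ x' : ∀ j, Xf j,
    if ∀ j ∈ S, x' j = x j then
      (margP p x' /
          ∑ x'' : ∀ j, Xf j, if ∀ j ∈ S, x'' j = x j then margP p x'' else 0) *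
        entY p Finset.univ x'
    else 0

/-- The Shapley value `φ_v(j, x)` of feature `j` at point `x` for the game `v`. -/
def shapley {d : ℕ} {X : Type*} (v : Finset (Fin d) → X → ℝ) (j : Fin d) (x : X) : ℝ :=
  ∑ S ∈ (Finset.univ.erase j).powerset,
    ((S.card.factorial : ℝ) * ((d - S.card - 1).factorial : ℝ) / (d.factorial : ℝ)) *
      (v (insert j S) x - v S x)

section Aux

variable {d : ℕ} {Xf : Fin d → Type*} {Y : Type*} [∀ j, Fintype (Xf j)] [Fintype Y]
    [∀ j, DecidableEq (Xf j)]

/-- pointwise Gibbs inequality -/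
lemma gibbs_pt {q m : ℝ} (hq : 0 < q) (hm : 0 < m) :
    q - m ≤ q * (Real.log q - Real.log m) := by
  have h := Real.log_le_sub_one_of_pos (div_pos hm hq)
  rw [Real.log_div hm.ne' hq.ne'] at h
  have h1 := mul_le_mul_of_nonneg_left h hq.le
  have h2 : q * (m / q - 1) = m - q := by field_simp
  have h3 : q * (Real.log m - Real.log q) = q * Real.log m - q * Real.log q := by ring
  have h4 : q * (Real.log q - Real.log m) = -(q * Real.log m - q * Real.log q) := by ring
  linarith

lemma gibbs_pt_strict {q m : ℝ} (hq : 0 < q) (hm : 0 < m) (hne : q ≠ m) :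
    q - m < q * (Real.log q - Real.log m) := by
  have hne' : m / q ≠ 1 := by
    intro h; exact hne ((div_eq_one_iff_eq hq.ne').mp h).symm
  have h := Real.log_lt_sub_one_of_pos (div_pos hm hq) hne'
  rw [Real.log_div hm.ne' hq.ne'] at h
  have h1 := (mul_lt_mul_iff_right₀ hq).mpr h
  have h2 : q * (m / q - 1) = m - q := by field_simp
  have h3 : q * (Real.log m - Real.log q) = q * Real.log m - q * Real.log q := by ring
  have h4 : q * (Real.log q - Real.log m) = -(q * Real.log m - q * Real.log q) := by ring
  linarith

lemma gibbs_nonneg (q m : Y → ℝ) (hq : ∀ y, 0 < q y) (hm : ∀ y, 0 < m y)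
    (hsq : ∑ y, q y = 1) (hsm : ∑ y, m y = 1) :
    0 ≤ ∑ y, q y * (Real.log (q y) - Real.log (m y)) := by
  have h : ∑ y, (q y - m y) ≤ ∑ y, q y * (Real.log (q y) - Real.log (m y)) :=
    Finset.sum_le_sum fun y _ => gibbs_pt (hq y) (hm y)
  rwa [Finset.sum_sub_distrib, hsq, hsm, sub_self] at h

lemma gibbs_eq (q m : Y → ℝ) (hq : ∀ y, 0 < q y) (hm : ∀ y, 0 < m y)
    (hsq : ∑ y, q y = 1) (hsm : ∑ y, m y = 1)
    (h0 : ∑ y, q y * (Real.log (q y) - Real.log (m y)) = 0) :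
    ∀ y, q y = m y := by
  have hg : ∀ y ∈ Finset.univ,
      (0:ℝ) ≤ q y * (Real.log (q y) - Real.log (m y)) - (q y - m y) := fun y _ =>
    sub_nonneg.mpr (gibbs_pt (hq y) (hm y))
  have hsum0 : ∑ y, (q y * (Real.log (q y) - Real.log (m y)) - (q y - m y)) = 0 := by
    rw [Finset.sum_sub_distrib, Finset.sum_sub_distrib, hsq, hsm, h0]; ring
  have hall := (Finset.sum_eq_zero_iff_of_nonneg hg).mp hsum0
  intro y
  by_contra hne
  have := gibbs_pt_strict (hq y) (hm y) hne
  have h2 := hall y (Finset.mem_univ y)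
  linarith

/-- Numerator of `condP`. -/
def numP (p : ((∀ j, Xf j) × Y) → ℝ) (S : Finset (Fin d)) (x : ∀ j, Xf j) (y : Y) : ℝ :=
  ∑ x' : ∀ j, Xf j, if ∀ j ∈ S, x' j = x j then p (x', y) else 0

/-- Denominator of `condP`. -/
def denP (p : ((∀ j, Xf j) × Y) → ℝ) (S : Finset (Fin d)) (x : ∀ j, Xf j) : ℝ :=
  ∑ x' : ∀ j, Xf j, if ∀ j ∈ S, x' j = x j then ∑ y' : Y, p (x', y') else 0

lemma condP_eq (p : ((∀ j, Xf j) × Y) → ℝ) (S : Finset (Fin d)) (x : ∀ j, Xf j) (y : Y) :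
    condP p S x y = numP p S x y / denP p S x := rfl

variable [Nonempty Y] {p : ((∀ j, Xf j) × Y) → ℝ} (hpos : ∀ z, 0 < p z)

include hpos

lemma numP_pos (S : Finset (Fin d)) (x : ∀ j, Xf j) (y : Y) : 0 < numP p S x y := by
  refine Finset.sum_pos' (fun x' _ => ?_) ⟨x, Finset.mem_univ x, ?_⟩
  · split_ifs
    · exact (hpos _).le
    · exact le_refl 0
  · rw [if_pos (fun j _ => rfl)]
    exact hpos _

lemma denP_pos (S : Finset (Fin d)) (x : ∀ j, Xf j) : 0 < denP p S x := by
  refine Finset.sum_pos' (fun x' _ => ?_) ⟨x, Finset.mem_univ x, ?_⟩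
  · split_ifs
    · exact (Finset.sum_pos (fun y _ => hpos _) Finset.univ_nonempty).le
    · exact le_refl 0
  · rw [if_pos (fun j _ => rfl)]
    exact Finset.sum_pos (fun y _ => hpos _) Finset.univ_nonempty

lemma condP_pos (S : Finset (Fin d)) (x : ∀ j, Xf j) (y : Y) : 0 < condP p S x y :=
  div_pos (numP_pos hpos S x y) (denP_pos hpos S x)

omit hpos

lemma sum_numP (S : Finset (Fin d)) (x : ∀ j, Xf j) :
    ∑ y, numP p S x y = denP p S x := by
  unfold numP denP
  rw [Finset.sum_comm]
  exact Finset.sum_congr rfl fun x' _ => by by_cases h : ∀ j ∈ S, x' j = x j <;> simp [h]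

include hpos

lemma sum_condP (S : Finset (Fin d)) (x : ∀ j, Xf j) :
    ∑ y, condP p S x y = 1 := by
  simp only [condP_eq]
  rw [← Finset.sum_div, sum_numP, div_self (denP_pos hpos S x).ne']

omit hpos

lemma sum_split {j : Fin d} {S : Finset (Fin d)} (hjS : j ∉ S) (x : ∀ i, Xf i)
    (f : (∀ i, Xf i) → ℝ) :
    ∑ x' : ∀ i, Xf i, (if ∀ i ∈ S, x' i = x i then f x' else 0)
      = ∑ t : Xf j, ∑ x' : ∀ i, Xf i,
          (if ∀ i ∈ insert j S, x' i = Function.update x j t i then f x' else 0) := by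
  rw [Finset.sum_comm]
  refine Finset.sum_congr rfl fun x' _ => ?_
  have key : ∀ t : Xf j,
      (∀ i ∈ insert j S, x' i = Function.update x j t i) ↔
        (t = x' j ∧ ∀ i ∈ S, x' i = x i) := by
    intro t
    rw [Finset.forall_mem_insert, Function.update_self]
    constructor
    · rintro ⟨h1, h2⟩
      refine ⟨h1.symm, fun i hi => ?_⟩
      have hij : i ≠ j := fun h => hjS (h ▸ hi)
      rw [h2 i hi, Function.update_of_ne hij]
    · rintro ⟨h1, h2⟩
      refine ⟨h1.symm, fun i hi => ?_⟩
      have hij : i ≠ j := fun h => hjS (h ▸ hi)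
      rw [Function.update_of_ne hij]; exact h2 i hi
  simp only [key]
  by_cases hC : ∀ i ∈ S, x' i = x i
  · rw [if_pos hC]
    have h1 : ∀ t : Xf j, (if t = x' j ∧ ∀ i ∈ S, x' i = x i then f x' else 0)
        = if t = x' j then f x' else 0 := fun t => by
      by_cases ht : t = x' j
      · rw [if_pos ⟨ht, hC⟩, if_pos ht]
      · rw [if_neg (fun hc => ht hc.1), if_neg ht]
    rw [Finset.sum_congr rfl fun t _ => h1 t]
    simp
  · rw [if_neg hC]
    have h1 : ∀ t : Xf j, (if t = x' j ∧ ∀ i ∈ S, x' i = x i then f x' else 0) = 0 :=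
      fun t => if_neg fun hc => hC hc.2
    rw [Finset.sum_congr rfl fun t _ => h1 t, Finset.sum_const, smul_zero]

lemma numP_split {j : Fin d} {S : Finset (Fin d)} (hjS : j ∉ S) (x : ∀ i, Xf i) (y : Y) :
    numP p S x y = ∑ t : Xf j, numP p (insert j S) (Function.update x j t) y :=
  sum_split hjS x _

lemma denP_split {j : Fin d} {S : Finset (Fin d)} (hjS : j ∉ S) (x : ∀ i, Xf i) :
    denP p S x = ∑ t : Xf j, denP p (insert j S) (Function.update x j t) :=
  sum_split hjS x _

lemma condP_update {j : Fin d} {S : Finset (Fin d)} (hjS : j ∉ S) (x : ∀ i, Xf i) (t : Xf j) :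
    condP p S (Function.update x j t) = condP p S x := by
  have key : ∀ x' : ∀ i, Xf i,
      (∀ i ∈ S, x' i = Function.update x j t i) ↔ (∀ i ∈ S, x' i = x i) := by
    intro x'
    refine forall₂_congr fun i hi => ?_
    have hij : i ≠ j := fun h => hjS (h ▸ hi)
    rw [Function.update_of_ne hij]
  funext y
  unfold condP
  simp only [key]

end Aux
/-- conditional independence characterizes vanishing marginal
contributions in the information-gain game. -/
theorem cond_indep_iff_zero_marginal_ig {d : ℕ} (hd : 1 ≤ d) {Xf : Fin d → Type*} {Y : Type*}
    [∀ j, Fintype (Xf j)] [∀ j, Nonempty (Xf j)] [∀ j, DecidableEq (Xf j)]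
    [Fintype Y] [Nonempty Y]
    (p : ((∀ j, Xf j) × Y) → ℝ)
    (hpos : ∀ z : ((∀ j, Xf j) × Y), 0 < p z)
    (hsum : ∑ z : ((∀ j, Xf j) × Y), p z = 1)
    (j : Fin d) (S : Finset (Fin d)) (hjS : j ∉ S) :
    (∀ (x : ∀ j, Xf j) (y : Y), condP p (insert j S) x y = condP p S x y) ↔
      ∀ x : ∀ j, Xf j, vIG p (insert j S) x - vIG p S x = 0 := by
  constructor
  · intro h x
    simp only [vIG, entY, h]
    ring
  · intro h x y
    set xt : Xf j → ∀ i, Xf i := fun t => Function.update x j t with hxt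
    set q : Xf j → Y → ℝ := fun t => condP p (insert j S) (xt t) with hq
    set m : Y → ℝ := fun y => condP p S x y with hm
    set w : Xf j → ℝ := fun t => denP p (insert j S) (xt t) / denP p S x with hw
    have hq_pos : ∀ t y', 0 < q t y' := fun t y' => condP_pos hpos _ _ _
    have hm_pos : ∀ y', 0 < m y' := fun y' => condP_pos hpos _ _ _
    have hq_sum : ∀ t, ∑ y', q t y' = 1 := fun t => sum_condP hpos _ _
    have hm_sum : ∑ y', m y' = 1 := sum_condP hpos _ _
    have hw_pos : ∀ t, 0 < w t := fun t =>
      div_pos (denP_pos hpos _ _) (denP_pos hpos _ _)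
    have hw_sum : ∑ t, w t = 1 := by
      simp only [hw]
      rw [← Finset.sum_div, ← denP_split hjS, div_self (denP_pos hpos S x).ne']
    have hmix : ∀ y', m y' = ∑ t, w t * q t y' := by
      intro y'
      have step : ∀ t, w t * q t y' = numP p (insert j S) (xt t) y' / denP p S x := by
        intro t
        simp only [hw, hq, hxt, condP_eq]
        have h1 : denP p (insert j S) (Function.update x j t) ≠ 0 := (denP_pos hpos _ _).ne'
        have h2 : denP p S x ≠ 0 := (denP_pos hpos S x).ne'
        field_simp
      rw [Finset.sum_congr rfl fun t _ => step t, ← Finset.sum_div]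
      simp only [hm, hxt, condP_eq]
      rw [numP_split hjS x y']
    have hent : ∀ t, ∑ y', q t y' * Real.log (q t y') = ∑ y', m y' * Real.log (m y') := by
      intro t
      have h1 := h (xt t)
      have h2 : condP p S (xt t) = condP p S x := condP_update hjS x t
      simp only [vIG, entY, sub_eq_zero, neg_inj, h2] at h1
      simp only [hq, hm]
      exact h1
    set KL : Xf j → ℝ := fun t => ∑ y', q t y' * (Real.log (q t y') - Real.log (m y'))
      with hKL
    have hKLsum : ∑ t, w t * KL t = 0 := by
      have expand : ∀ t, w t * KL t
          = w t * (∑ y', q t y' * Real.log (q t y'))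
            - ∑ y', w t * q t y' * Real.log (m y') := by
        intro t
        simp only [hKL]
        rw [Finset.mul_sum, Finset.mul_sum, ← Finset.sum_sub_distrib]
        refine Finset.sum_congr rfl fun y' _ => by ring
      rw [Finset.sum_congr rfl fun t _ => expand t, Finset.sum_sub_distrib]
      have e1 : ∑ t, w t * (∑ y', q t y' * Real.log (q t y'))
          = ∑ y', m y' * Real.log (m y') := by
        rw [Finset.sum_congr rfl fun t _ => by rw [hent t], ← Finset.sum_mul, hw_sum,
          one_mul]
      have e2 : ∑ t, ∑ y', w t * q t y' * Real.log (m y')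
          = ∑ y', m y' * Real.log (m y') := by
        rw [Finset.sum_comm]
        refine Finset.sum_congr rfl fun y' _ => ?_
        rw [← Finset.sum_mul, ← hmix y']
      rw [e1, e2, sub_self]
    have hKL_nonneg : ∀ t, 0 ≤ KL t := fun t =>
      gibbs_nonneg (q t) m (hq_pos t) hm_pos (hq_sum t) hm_sum
    have hterm : ∀ t ∈ Finset.univ, w t * KL t = 0 :=
      (Finset.sum_eq_zero_iff_of_nonneg fun t _ =>
        mul_nonneg (hw_pos t).le (hKL_nonneg t)).mp hKLsum
    have hKL0 : KL (x j) = 0 := by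
      have := hterm (x j) (Finset.mem_univ _)
      rcases mul_eq_zero.mp this with h' | h'
      · exact absurd h' (hw_pos (x j)).ne'
      · exact h'
    have hfin := gibbs_eq (q (x j)) m (hq_pos (x j)) hm_pos (hq_sum (x j)) hm_sum hKL0 y
    simp only [hq, hxt, hm] at hfin
    rwa [Function.update_eq_self] at hfin
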